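/- (Tweedie's formula, second moment.) Under the same exponential family Bayes model, if f and f_0 are twice differentiable at z and differentiation under the integral sign is valid, then the posterior variance satisfies Var(δ | z) = −(d²/dz²) log(f_0(z)/f(z)) = (d²/dz²) log f(z) − (d²/dz²) log f_0(z). -/

import Mathlib

open MeasureTheory Real

/-- Tweedie's formula, second moment: in the exponential family Bayes model,
if `f` and `f_0` are twice differentiable at `z` (with differentiation under the integral
sign valid), then the posterior variance satisfies
`Var(δ|z) = −(d²/dz²) log(f_0(z)/f(z)) = (log f)''(z) − (log f_0)''(z)`. -/
theorem stmt_2 (ψ g f0 f m m1 : ℝ → ℝ) (z : ℝ)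
    (hm : ∀ t, m t = ∫ δ : ℝ, Real.exp (t * δ - ψ δ) * g δ)
    (hm1 : ∀ t, m1 t = ∫ δ : ℝ, δ * Real.exp (t * δ - ψ δ) * g δ)
    (hf : ∀ t, f t = m t * f0 t)
    (hf0pos : ∀ t, 0 < f0 t) (hmpos : ∀ t, 0 < m t)
    -- differentiation under the integral sign, twice:
    (hderiv1 : ∀ t, HasDerivAt m (m1 t) t)
    (hderiv2 : HasDerivAt m1 (∫ δ : ℝ, δ ^ 2 * Real.exp (z * δ - ψ δ) * g δ) z)
    (hint1 : Integrable (fun δ : ℝ => δ * Real.exp (z * δ - ψ δ) * g δ))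
    (hint2 : Integrable (fun δ : ℝ => δ ^ 2 * Real.exp (z * δ - ψ δ) * g δ))
    (hf0smooth : ContDiffAt ℝ 2 f0 z) :
    (∫ δ : ℝ, δ ^ 2 * (Real.exp (z * δ - ψ δ) * f0 z * g δ / f z))
        - (∫ δ : ℝ, δ * (Real.exp (z * δ - ψ δ) * f0 z * g δ / f z)) ^ 2
      = -(deriv (fun t => deriv (fun s => Real.log (f0 s / f s)) t) z)
    ∧ (∫ δ : ℝ, δ ^ 2 * (Real.exp (z * δ - ψ δ) * f0 z * g δ / f z))
        - (∫ δ : ℝ, δ * (Real.exp (z * δ - ψ δ) * f0 z * g δ / f z)) ^ 2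
      = deriv (fun t => deriv (fun s => Real.log (f s)) t) z
        - deriv (fun t => deriv (fun s => Real.log (f0 s)) t) z := by
  set M2 : ℝ := ∫ δ : ℝ, δ ^ 2 * Real.exp (z * δ - ψ δ) * g δ with hM2
  have hfz : f z = m z * f0 z := hf z
  -- rewrite the two integrals
  have hI2 : (∫ δ : ℝ, δ ^ 2 * (Real.exp (z * δ - ψ δ) * f0 z * g δ / f z))
      = M2 * (m z)⁻¹ := by
    have h : ∀ δ : ℝ, δ ^ 2 * (Real.exp (z * δ - ψ δ) * f0 z * g δ / f z)
        = (δ ^ 2 * Real.exp (z * δ - ψ δ) * g δ) * (m z)⁻¹ := by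
      intro δ
      rw [hfz]
      field_simp [(hmpos z).ne', (hf0pos z).ne']
    simp_rw [h]
    rw [integral_mul_const, hM2]
  have hI1 : (∫ δ : ℝ, δ * (Real.exp (z * δ - ψ δ) * f0 z * g δ / f z))
      = m1 z * (m z)⁻¹ := by
    have h : ∀ δ : ℝ, δ * (Real.exp (z * δ - ψ δ) * f0 z * g δ / f z)
        = (δ * Real.exp (z * δ - ψ δ) * g δ) * (m z)⁻¹ := by
      intro δ
      rw [hfz]
      field_simp [(hmpos z).ne', (hf0pos z).ne']
    simp_rw [h]
    rw [integral_mul_const, hm1 z]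
  -- log m and its derivatives
  have hLm : ∀ t, HasDerivAt (fun s => Real.log (m s)) (m1 t / m t) t :=
    fun t => (hderiv1 t).log (hmpos t).ne'
  have hderivLm : deriv (fun s => Real.log (m s)) = fun t => m1 t / m t :=
    funext fun t => (hLm t).deriv
  have hq : HasDerivAt (fun t => m1 t / m t)
      ((M2 * m z - m1 z * m1 z) / (m z) ^ 2) z :=
    hderiv2.div (hderiv1 z) (hmpos z).ne'
  have hLm2 : deriv (deriv (fun s => Real.log (m s))) z
      = (M2 * m z - m1 z * m1 z) / (m z) ^ 2 := by
    rw [hderivLm]; exact hq.deriv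
  have hLHS : (∫ δ : ℝ, δ ^ 2 * (Real.exp (z * δ - ψ δ) * f0 z * g δ / f z))
        - (∫ δ : ℝ, δ * (Real.exp (z * δ - ψ δ) * f0 z * g δ / f z)) ^ 2
      = (M2 * m z - m1 z * m1 z) / (m z) ^ 2 := by
    rw [hI1, hI2]
    field_simp [(hmpos z).ne']
  constructor
  · -- first identity
    have key : (fun s => Real.log (f0 s / f s)) = fun s => -Real.log (m s) := by
      funext s
      have : f0 s / f s = (m s)⁻¹ := by
        rw [hf s]
        field_simp [(hf0pos s).ne', (hmpos s).ne']
      rw [this, Real.log_inv]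
    rw [hLHS, key]
    have h1 : (fun t => deriv (fun s => -Real.log (m s)) t)
        = fun t => -(deriv (fun s => Real.log (m s)) t) := by
      funext t; exact deriv.neg
    rw [h1, deriv.fun_neg, hderivLm, hq.deriv]; ring
  · -- second identity: work in a neighborhood of z
    obtain ⟨U, hUmem, hUc⟩ := hf0smooth.contDiffOn (le_refl 2) (by simp)
    obtain ⟨V, hVU, hVopen, hzV⟩ := mem_nhds_iff.mp hUmem
    have hVc : ContDiffOn ℝ 2 f0 V := hUc.mono hVU
    have hdf0 : ∀ t ∈ V, DifferentiableAt ℝ f0 t := fun t ht =>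
      ((hVc t ht).contDiffAt (hVopen.mem_nhds ht)).differentiableAt (by norm_num)
    have hdderivf0 : DifferentiableAt ℝ (deriv f0) z := by
      have h := hVc.deriv_of_isOpen hVopen (show (1 : WithTop ℕ∞) + 1 ≤ 2 from by norm_num)
      exact ((h z hzV).contDiffAt (hVopen.mem_nhds hzV)).differentiableAt (by norm_num)
    have hLf0 : ∀ t ∈ V, HasDerivAt (fun s => Real.log (f0 s))
        (deriv f0 t / f0 t) t := fun t ht =>
      ((hdf0 t ht).hasDerivAt).log (hf0pos t).ne'
    -- deriv of log f0 eventually equals deriv f0 / f0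
    have hev0 : deriv (fun s => Real.log (f0 s)) =ᶠ[nhds z]
        fun t => deriv f0 t / f0 t := by
      filter_upwards [hVopen.mem_nhds hzV] with t ht
      exact (hLf0 t ht).deriv
    have hd2 : DifferentiableAt ℝ (deriv (fun s => Real.log (f0 s))) z := by
      rw [Filter.EventuallyEq.differentiableAt_iff hev0]
      exact hdderivf0.div (hdf0 z hzV) (hf0pos z).ne'
    -- log f = log m + log f0
    have hEq : (fun s => Real.log (f s))
        = fun s => Real.log (m s) + Real.log (f0 s) := by
      funext s
      rw [hf s, Real.log_mul (hmpos s).ne' (hf0pos s).ne']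
    have hev : deriv (fun s => Real.log (f s)) =ᶠ[nhds z]
        fun t => m1 t / m t + deriv (fun s => Real.log (f0 s)) t := by
      filter_upwards [hVopen.mem_nhds hzV] with t ht
      rw [hEq]
      rw [((hLm t).fun_add (hLf0 t ht)).deriv, (hLf0 t ht).deriv]
    have step : deriv (fun t => deriv (fun s => Real.log (f s)) t) z
        = deriv (fun t => m1 t / m t + deriv (fun s => Real.log (f0 s)) t) z :=
      hev.deriv_eq
    rw [hLHS, step, deriv_fun_add hq.differentiableAt hd2, hq.deriv]
    ring
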